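/- The semicascade generated by an affine self-map φ(x) = Ax + b of 𝕋^d is tame if and only if A^p = A^q for some nonnegative integers p ≠ q. -/

import Mathlib

open Filter Topology
open MeasureTheory AddCircle

lemma fourier_integral_eq {T : ℝ} [Fact (0 < T)] (n : ℤ) :
    ∫ t : AddCircle T, (fourier n t : ℂ) ∂haarAddCircle
      = if n = 0 then 1 else 0 := by
  split_ifs with h
  · subst h; simp [fourier_zero]
  · exact integral_eq_zero_of_add_right_eq_neg (fourier_add_half_inv_index h Fact.out)

lemma no_char_limit {T : ℝ} [hT : Fact (0 < T)] (m : ℕ → ℤ)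
    (hm : ∀ i : ℕ, (i : ℤ) < |m i|) (Lf : AddCircle T → AddCircle T)
    (hlim : ∀ t, Tendsto (fun i => (m i) • t) atTop (𝓝 (Lf t))) : False := by
  set μ : Measure (AddCircle T) := haarAddCircle with hμ
  set F : AddCircle T → ℂ := fun t => fourier 1 (Lf t) with hFdef
  have hF : ∀ t, Tendsto (fun i => (fourier (m i) t : ℂ)) atTop (𝓝 (F t)) := by
    intro t
    have := ((fourier (T := T) 1).continuous.tendsto (Lf t)).comp (hlim t)
    refine this.congr fun i => ?_
    show fourier 1 ((m i) • t) = fourier (m i) t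
    rw [fourier_apply, fourier_apply, one_zsmul]
  have hnorm : ∀ (n : ℤ) (t : AddCircle T), ‖(fourier n t : ℂ)‖ = 1 := by
    intro n t; rw [fourier_apply]; exact Circle.norm_coe _
  have hFnorm : ∀ t, ‖F t‖ = 1 := by
    intro t
    refine tendsto_nhds_unique ((hF t).norm) ?_
    exact Tendsto.congr (fun i => (hnorm (m i) t).symm) tendsto_const_nhds
  have hFmeas : AEStronglyMeasurable F μ := by
    refine (stronglyMeasurable_of_tendsto atTop
      (f := fun i => ⇑(fourier (T := T) (m i))) (g := F)
      (fun i => (fourier (m i)).continuous.stronglyMeasurable) ?_).aestronglyMeasurable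
    rw [tendsto_pi_nhds]
    exact hF
  set c : ℕ → ℂ := fun i => ∫ t, (fourier (m i) t : ℂ) * starRingEnd ℂ (F t) ∂μ with hc
  have hmeas_i : ∀ i : ℕ, AEStronglyMeasurable
      (fun t => (fourier (m i) t : ℂ) * starRingEnd ℂ (F t)) μ :=
    fun i => (fourier (m i)).continuous.aestronglyMeasurable.mul
      (Complex.continuous_conj.comp_aestronglyMeasurable hFmeas)
  have hbound1 : Integrable (fun _ : AddCircle T => (1:ℝ)) μ := integrable_const 1
  -- Step 1 : c → 1
  have step1 : Tendsto c atTop (𝓝 1) := by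
    have hdct := tendsto_integral_of_dominated_convergence (μ := μ)
      (F := fun i t => (fourier (m i) t : ℂ) * starRingEnd ℂ (F t))
      (f := fun t => F t * starRingEnd ℂ (F t)) (fun _ => (1:ℝ))
      hmeas_i hbound1
      (fun i => Eventually.of_forall fun t => by
        rw [norm_mul, hnorm, RCLike.norm_conj, hFnorm, one_mul])
      (Eventually.of_forall fun t => (hF t).mul_const _)
    have heq : (fun t : AddCircle T => F t * starRingEnd ℂ (F t)) = fun _ => (1:ℂ) := by
      funext t
      rw [Complex.mul_conj]
      rw [Complex.normSq_eq_norm_sq]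
      rw [hFnorm]
      norm_num
    rw [heq] at hdct
    have h1 : (∫ _ : AddCircle T, (1:ℂ) ∂μ) = 1 := by simp [hμ]
    rw [h1] at hdct; exact hdct
  -- Step 2 : each c i = 0
  have step2 : ∀ i, c i = 0 := by
    intro i
    have hdct := tendsto_integral_of_dominated_convergence (μ := μ)
      (F := fun j t => (fourier (m i - m j) t : ℂ))
      (f := fun t => (fourier (m i) t : ℂ) * starRingEnd ℂ (F t)) (fun _ => (1:ℝ))
      (fun j => (fourier (m i - m j)).continuous.aestronglyMeasurable) hbound1
      (fun j => Eventually.of_forall fun t => by rw [hnorm])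
      (Eventually.of_forall fun t => by
        have h1 : Tendsto (fun j => (fourier (-(m j)) t : ℂ)) atTop
            (𝓝 (starRingEnd ℂ (F t))) := by
          have := (Complex.continuous_conj.tendsto (F t)).comp (hF t)
          exact this.congr fun j => (fourier_neg).symm
        have := (tendsto_const_nhds (x := (fourier (m i) t : ℂ)) (f := atTop)).mul h1
        refine this.congr fun j => ?_
        rw [← fourier_add]; show _ = (fourier (m i - m j)) t; rw [sub_eq_add_neg])
    -- the integrals are eventually 0
    have hev : ∀ᶠ j in atTop, (∫ t, (fourier (m i - m j) t : ℂ) ∂μ) = 0 := by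
      filter_upwards [eventually_ge_atTop ((m i).natAbs + 1)] with j hj
      rw [hμ, fourier_integral_eq]
      rw [if_neg]
      intro hcontra
      have h1 : m i = m j := by omega
      have := hm j
      rw [← h1] at this
      have h2 : |m i| ≤ ((m i).natAbs : ℤ) := by rw [Int.abs_eq_natAbs]
      omega
    have : Tendsto (fun j => ∫ t, (fourier (m i - m j) t : ℂ) ∂μ) atTop (𝓝 0) :=
      Tendsto.congr' (by filter_upwards [hev] with j hj using hj.symm) tendsto_const_nhds
    exact (tendsto_nhds_unique hdct this).symm ▸ rfl
  have : (1 : ℂ) = 0 := tendsto_nhds_unique step1 (by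
    refine Tendsto.congr (fun i => (step2 i).symm) tendsto_const_nhds)
  exact one_ne_zero this

lemma pow_bounded {M : Type*} [Monoid M] {A : M} {p q : ℕ} (hlt : p < q)
    (h : A ^ p = A ^ q) : ∀ N, ∃ s, s < q ∧ A ^ N = A ^ s := by
  have key : ∀ s, A ^ (p + s) = A ^ (p + s % (q - p)) := by
    intro s
    induction s using Nat.strong_induction_on with
    | _ s ih =>
      by_cases hs : s < q - p
      · rw [Nat.mod_eq_of_lt hs]
      · push_neg at hs
        have h2 : A ^ (p + s) = A ^ (p + (s - (q - p))) := by
          have h1 : p + s = q + (s - (q - p)) := by omega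
          rw [h1, pow_add, pow_add, ← h]
        rw [h2, ih _ (by omega), Nat.mod_eq_sub_mod hs]
  intro N
  by_cases hN : N < q
  · exact ⟨N, hN, rfl⟩
  · refine ⟨p + (N - p) % (q - p), ?_, ?_⟩
    · have := Nat.mod_lt (N - p) (show 0 < q - p by omega)
      omega
    · have hNp : N = p + (N - p) := by omega
      conv_lhs => rw [hNp]
      exact key (N - p)

noncomputable def affApply {d : ℕ} (A : Matrix (Fin d) (Fin d) ℤ)
    (b : Fin d → AddCircle (2 * Real.pi)) (x : Fin d → AddCircle (2 * Real.pi)) :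
    Fin d → AddCircle (2 * Real.pi) :=
  fun i => (∑ j, A i j • x j) + b i

lemma iterate_affApply {d : ℕ} (A : Matrix (Fin d) (Fin d) ℤ)
    (b : Fin d → AddCircle (2 * Real.pi)) (N : ℕ) (x : Fin d → AddCircle (2 * Real.pi)) :
    (affApply A b)^[N] x
      = fun i => (∑ j, (A ^ N) i j • x j) + (affApply A b)^[N] 0 i := by
  induction N generalizing x with
  | zero => funext i; simp [Matrix.one_apply]
  | succ N ih =>
    funext i
    rw [Function.iterate_succ_apply', Function.iterate_succ_apply', ih x, ih 0]
    simp only [affApply, Pi.zero_apply, smul_zero, Finset.sum_const_zero, zero_add,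
      smul_add, Finset.sum_add_distrib]
    rw [add_assoc]
    congr 1
    rw [pow_succ']
    simp_rw [Matrix.mul_apply, Finset.sum_smul, mul_smul, Finset.smul_sum]
    exact Finset.sum_comm

theorem stmt7 {d : ℕ} (A : Matrix (Fin d) (Fin d) ℤ)
    (b : Fin d → AddCircle (2 * Real.pi)) :
    (∀ n : ℕ → ℕ, ∃ k : ℕ → ℕ, StrictMono k ∧
        ∀ x, ∃ L, Tendsto (fun i => (affApply A b)^[n (k i)] x) atTop (𝓝 L)) ↔
      ∃ p q : ℕ, p ≠ q ∧ A ^ p = A ^ q := by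
  haveI : Fact (0 < 2 * Real.pi) := ⟨by positivity⟩
  constructor
  · intro h
    by_contra hcon
    push_neg at hcon
    have hinj : Function.Injective (fun N : ℕ => A ^ N) := by
      intro p q hpq
      by_contra hne
      exact hcon p q hne hpq
    have hrange := Set.infinite_range_of_injective hinj
    have hunb : ∃ a0 b0 : Fin d, ∀ C : ℕ, ∃ N : ℕ, (C : ℤ) < |(A ^ N) a0 b0| := by
      by_contra hb
      push_neg at hb
      choose C hC using hb
      apply hrange
      apply Set.Finite.subset
        (Set.Finite.pi fun a => Set.Finite.pi fun b' => Set.finite_Icc (-(C a b' : ℤ)) (C a b'))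
      rintro M ⟨N, rfl⟩
      simp only [Set.mem_pi, Set.mem_univ, forall_true_left, Set.mem_Icc]
      intro a _ b' _
      exact abs_le.mp (hC a b' N)
    obtain ⟨a0, b0, hunb⟩ := hunb
    choose n hn using fun j : ℕ => hunb j
    obtain ⟨k, hk, hconv⟩ := h n
    set m : ℕ → ℤ := fun i => (A ^ n (k i)) a0 b0 with hmdef
    have hm : ∀ i : ℕ, (i : ℤ) < |m i| := fun i =>
      lt_of_le_of_lt (by exact_mod_cast hk.le_apply) (hn (k i))
    have hlim' : ∀ t : AddCircle (2 * Real.pi), ∃ L, Tendsto (fun i => m i • t) atTop (𝓝 L) := by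
      intro t
      obtain ⟨L1, hL1⟩ := hconv (fun j => if j = b0 then t else 0)
      obtain ⟨L0, hL0⟩ := hconv 0
      refine ⟨L1 a0 - L0 a0, ?_⟩
      have h1 := (tendsto_pi_nhds.mp hL1) a0
      have h0 := (tendsto_pi_nhds.mp hL0) a0
      refine (h1.sub h0).congr fun i => ?_
      rw [iterate_affApply]
      simp only
      rw [add_sub_cancel_right]
      have hterm : ∀ j, (A ^ n (k i)) a0 j •
            (if j = b0 then t else (0 : AddCircle (2 * Real.pi)))
          = if j = b0 then (A ^ n (k i)) a0 b0 • t else 0 := by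
        intro j
        split_ifs with hj
        · rw [hj]
        · exact smul_zero _
      rw [Finset.sum_congr rfl fun j _ => hterm j, Finset.sum_ite_eq' Finset.univ b0]
      simp
      rfl
    choose Lf hLf using hlim'
    exact (no_char_limit m hm Lf hLf).elim
  · rintro ⟨p, q, hpq, hAeq⟩ n
    obtain ⟨p', q', hlt, heq⟩ : ∃ p' q', p' < q' ∧ A ^ p' = A ^ q' := by
      rcases hpq.lt_or_gt with hh | hh
      exacts [⟨p, q, hh, hAeq⟩, ⟨q, p, hh, hAeq.symm⟩]
    choose g hg hgA using fun j => pow_bounded hlt heq (n j)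
    have hfreq : ∃ s : ℕ, ∃ᶠ j in atTop, g j = s := by
      by_contra hcon
      push_neg at hcon
      have hne : ∀ s : ℕ, ∀ᶠ j in atTop, g j ≠ s := fun s => hcon s
      have hall : ∀ᶠ j in atTop, ∀ s ∈ Finset.range q', g j ≠ s :=
        (eventually_all_finset _).mpr fun s _ => hne s
      obtain ⟨j, hj⟩ := hall.exists
      exact hj (g j) (Finset.mem_range.mpr (hg j)) rfl
    obtain ⟨s, hfreq⟩ := hfreq
    obtain ⟨k1, hk1, hk1P⟩ := extraction_of_frequently_atTop hfreq
    obtain ⟨Lc, -, k2, hk2, hk2T⟩ := isCompact_univ.tendsto_subseq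
      (x := fun i => (affApply A b)^[n (k1 i)] (0 : Fin d → AddCircle (2 * Real.pi)))
      (fun i => Set.mem_univ _)
    refine ⟨k1 ∘ k2, hk1.comp hk2, fun x => ⟨fun a => (∑ j, (A ^ s) a j • x j) + Lc a, ?_⟩⟩
    rw [tendsto_pi_nhds]
    intro a
    have hTc := (tendsto_pi_nhds.mp hk2T) a
    refine (Tendsto.const_add (∑ j, (A ^ s) a j • x j) hTc).congr fun i => ?_
    show _ = (affApply A b)^[n (k1 (k2 i))] x a
    rw [iterate_affApply]
    simp only
    rw [hgA (k1 (k2 i)), hk1P (k2 i)]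
    rfl
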